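/- Let G be a finite group. There is a bijection between G-indexing systems in the sense of Blumberg–Hill (collections I(H) of finite H-sets for each subgroup H ≤ G, containing all trivial H-sets, closed under isomorphism, restriction, conjugation, subobjects, binary coproducts, and admissible induction: if U ∈ I(K) and H/K ∈ I(H) then Ind_K^H U ∈ I(H)) and wide subcategories ℐ of the orbit category O_G containing all isomorphisms, closed under composition, and closed under base-change along summand inclusions in finite G-sets. The bijection declares f : V → W ≅ G/H to lie in ℐ iff V, viewed as an H-set via F_H ≃ (F_G)^{/(G/H)}, lies in I(H). -/

import Mathlib

open CategoryTheory CategoryTheory.Limits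

universe u v

namespace ParamOperads

variable {D : Type u} [Category.{v} D]

/-- A morphism is a *summand inclusion* if it is one leg of a binary coproduct cocone. -/
def IsSummandInclusion {A B : D} (i : A ⟶ B) : Prop :=
  ∃ (C : D) (c : C ⟶ B), Nonempty (IsColimit (BinaryCofan.mk i c))

/-- Data exhibiting the category `D` as the finite coproduct completion of its
subcategory of orbits: every object decomposes as a finite coproduct of orbits,
and orbits are connected (every map from an orbit into a finite coproduct factors
through one of the summands). -/
structure CoprodCompletion (D : Type u) [Category.{v} D] where
  IsOrbit : D → Prop
  decomp : ∀ X : D, ∃ (n : ℕ) (obj : Fin n → D) (ι : ∀ i, obj i ⟶ X),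
      (∀ i, IsOrbit (obj i)) ∧ Nonempty (IsColimit (Cofan.mk X ι))
  orbit_connected : ∀ {W X : D}, IsOrbit W →
      ∀ (n : ℕ) (obj : Fin n → D) (ι : ∀ i, obj i ⟶ X),
        Nonempty (IsColimit (Cofan.mk X ι)) →
        ∀ f : W ⟶ X, ∃ (i : Fin n) (g : W ⟶ obj i), g ≫ ι i = f

/-- Atomicity: every morphism between orbits admitting a left inverse is an isomorphism. -/
def Atomic (S : CoprodCompletion D) : Prop :=
  ∀ {V W : D}, S.IsOrbit V → S.IsOrbit W →
    ∀ f : V ⟶ W, (∃ r : W ⟶ V, f ≫ r = 𝟙 V) → IsIso f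

/-- A *fold map* is a morphism isomorphic to a finite coproduct of codiagonals of
copies of orbits (possibly empty families). -/
def IsFoldMapP (Orb : D → Prop) {U U' : D} (α : U ⟶ U') : Prop :=
  ∃ (n : ℕ) (W : Fin n → D) (k : Fin n → ℕ)
    (ι' : ∀ i, W i ⟶ U') (ι : ∀ p : Σ i : Fin n, Fin (k i), W p.1 ⟶ U),
    (∀ i, Orb (W i)) ∧
    Nonempty (IsColimit (Cofan.mk U' ι')) ∧
    Nonempty (IsColimit (Cofan.mk U ι)) ∧
    ∀ p, ι p ≫ α = ι' p.1

/-- Fold maps relative to a coproduct-completion structure. -/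
def IsFoldMap (S : CoprodCompletion D) {U U' : D} (α : U ⟶ U') : Prop :=
  IsFoldMapP S.IsOrbit α


/-- The category of finite `G`-sets. -/
abbrev FinGSet (G : Type) [Group G] := Action FintypeCat (MonCat.of G)

/-- A finite `G`-set is an orbit when the action is transitive (and it is nonempty). -/
def IsTransitive {G : Type} [Group G] (X : FinGSet G) : Prop :=
  Nonempty X.V ∧ ∀ x y : X.V, ∃ g : G, ConcreteCategory.hom (C := FintypeCat) (X.ρ g) x = y

/-- A `G`-indexing system in the sense of Blumberg–Hill, encoded via the equivalence
`F_H ≃ (F_G)^{/(G/H)}`: the data assigns to each orbit `W ≅ G/H` the collection of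
finite `G`-sets `p : X ⟶ W` over it (i.e. finite `H`-sets), containing all trivial
`H`-sets (fold maps), closed under isomorphism, restriction (pullback along maps of
orbits), conjugation (composition with isomorphisms of orbits), subobjects (summand
inclusions), binary coproducts, and admissible induction (composition with a member
map of orbits). -/
structure GIndexingSystem (G : Type) [Group G] [Fintype G] where
  mem : ∀ {X W : FinGSet G}, (X ⟶ W) → Prop
  target_orbit : ∀ {X W : FinGSet G} (p : X ⟶ W), mem p → IsTransitive W
  trivial_mem : ∀ {X W : FinGSet G} (p : X ⟶ W), IsTransitive W →
      IsFoldMapP IsTransitive p → mem p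
  iso_mem : ∀ {X X' W : FinGSet G} (e : X ≅ X') (p : X' ⟶ W),
      mem p → mem (e.hom ≫ p)
  res_mem : ∀ {P X V W : FinGSet G} (p₁ : P ⟶ V) (p₂ : P ⟶ X)
      (q : V ⟶ W) (p : X ⟶ W), IsTransitive V → IsTransitive W →
      IsPullback p₁ p₂ q p → mem p → mem p₁
  conj_mem : ∀ {X W W' : FinGSet G} (p : X ⟶ W) (e : W ≅ W'),
      IsTransitive W' → mem p → mem (p ≫ e.hom)
  sub_mem : ∀ {X' X W : FinGSet G} (j : X' ⟶ X) (p : X ⟶ W),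
      IsSummandInclusion j → mem p → mem (j ≫ p)
  coprod_mem : ∀ {A B X W : FinGSet G} (ia : A ⟶ X) (ib : B ⟶ X) (h : X ⟶ W),
      IsTransitive W → Nonempty (IsColimit (BinaryCofan.mk ia ib)) →
      mem (ia ≫ h) → mem (ib ≫ h) → mem h
  ind_mem : ∀ {U V W : FinGSet G} (p : U ⟶ V) (q : V ⟶ W),
      IsTransitive V → IsTransitive W → mem p → mem q → mem (p ≫ q)

/-- A wide subcategory of the orbit category `O_G`: a class of morphisms between
transitive finite `G`-sets containing all isomorphisms, closed under composition
and under base-change along summand inclusions in finite `G`-sets. -/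
structure OrbitSubcategory (G : Type) [Group G] [Fintype G] where
  mem : ∀ {V W : FinGSet G}, (V ⟶ W) → Prop
  orbits : ∀ {V W : FinGSet G} (f : V ⟶ W), mem f → IsTransitive V ∧ IsTransitive W
  iso_mem : ∀ {V W : FinGSet G} (f : V ⟶ W), IsTransitive V → IsTransitive W →
      IsIso f → mem f
  comp_mem : ∀ {V W X : FinGSet G} (f : V ⟶ W) (g : W ⟶ X),
      mem f → mem g → mem (f ≫ g)
  base_change : ∀ {W' V' W V P : FinGSet G} (g : W' ⟶ V') (f : W ⟶ V)
      (a : W' ⟶ W) (b : V' ⟶ V) (p₁ : P ⟶ V') (p₂ : P ⟶ W) (s : W' ⟶ P),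
      IsTransitive W' → IsTransitive V' →
      IsPullback p₁ p₂ b f → s ≫ p₁ = g → s ≫ p₂ = a → IsSummandInclusion s →
      mem f → mem g

section BHHelpers
open Function
set_option linter.unusedVariables false
set_option linter.unusedSectionVars false

variable {G : Type} [Group G]

lemma hom_smul {X Y : FinGSet G} (f : X ⟶ Y) (g : G) (x : X.V) :
    f.hom (g • x) = g • f.hom x := ConcreteCategory.congr_hom (f.comm g) x

def mkHom {X Y : FinGSet G} (f : X.V → Y.V) (h : ∀ (g : G) x, f (g • x) = g • f x) : X ⟶ Y where
  hom := FintypeCat.homMk f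
  comm g := FintypeCat.hom_ext _ _ fun x => h g x

noncomputable def mkObj (T : Type*) [Finite T] [MulAction G T] : FinGSet G :=
  haveI := Fintype.ofFinite T
  Action.FintypeCat.ofMulAction G (FintypeCat.of T)

-- sigma action
instance sigmaAction {β : Type} (obj : β → FinGSet G) : MulAction G (Σ i, (obj i).V) where
  smul g p := ⟨p.1, g • p.2⟩
  one_smul p := congrArg (Sigma.mk p.1) (one_smul G p.2)
  mul_smul g h p := congrArg (Sigma.mk p.1) (mul_smul g h p.2)

lemma sigma_smul {β : Type} (obj : β → FinGSet G) (g : G) (p : Σ i, (obj i).V) :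
    g • p = ⟨p.1, g • p.2⟩ := rfl

/-- the canonical map of a cofan -/
def sigmaMap {β : Type} {obj : β → FinGSet G} {X : FinGSet G} (ι : ∀ i, obj i ⟶ X) :
    (Σ i, (obj i).V) → X.V := fun p => (ι p.1).hom p.2

lemma sigmaMap_equivariant {β : Type} {obj : β → FinGSet G} {X : FinGSet G}
    (ι : ∀ i, obj i ⟶ X) (g : G) (p : Σ i, (obj i).V) :
    sigmaMap ι (g • p) = g • sigmaMap ι p := hom_smul (ι p.1) g p.2

/-- bijective sigma map gives colimit cofan -/
noncomputable def isColimitOfBijective {β : Type} {obj : β → FinGSet G} {X : FinGSet G}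
    (ι : ∀ i, obj i ⟶ X) (hb : Bijective (sigmaMap ι)) : IsColimit (Cofan.mk X ι) := by
  set e := Equiv.ofBijective _ hb with he
  have hsymm : ∀ (g : G) (x : X.V), e.symm (g • x) = g • e.symm x := by
    intro g x
    apply e.injective
    rw [Equiv.apply_symm_apply]
    show _ = sigmaMap ι _
    rw [sigmaMap_equivariant]
    simp only [he, Equiv.ofBijective_apply_symm_apply]
  have hE : ∀ (t : Cofan obj) (g : G) (x : X.V),
      (t.inj (e.symm (g • x)).1).hom (e.symm (g • x)).2
        = g • (t.inj (e.symm x).1).hom (e.symm x).2 := by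
    intro t g x
    rw [hsymm]
    exact hom_smul (t.inj _) g _
  refine mkCofanColimit _
    (fun t => mkHom (fun x => (t.inj (e.symm x).1).hom (e.symm x).2) (hE t)) ?_ ?_
  · intro t i
    apply Action.hom_ext; apply FintypeCat.hom_ext; intro a
    show (t.inj (e.symm ((ι i).hom a)).1).hom (e.symm ((ι i).hom a)).2 = (t.inj i).hom a
    have : e.symm ((ι i).hom a) = ⟨i, a⟩ := by
      apply e.injective; rw [Equiv.apply_symm_apply]; rfl
    rw [this]
  · intro t m hm
    apply Action.hom_ext; apply FintypeCat.hom_ext; intro x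
    obtain ⟨p, rfl⟩ := hb.2 x
    show m.hom ((ι p.1).hom p.2) = _
    have h1 : m.hom ((ι p.1).hom p.2) = (t.inj p.1).hom p.2 := by
      have := congrArg Action.Hom.hom (hm p.1)
      exact ConcreteCategory.congr_hom this p.2
    rw [h1]
    have : e.symm (sigmaMap ι p) = p := e.symm_apply_apply p
    show _ = (t.inj (e.symm (sigmaMap ι p)).1).hom (e.symm (sigmaMap ι p)).2
    rw [this]

/-- the concrete sigma object -/
noncomputable def sigmaObj {β : Type} [Finite β] (obj : β → FinGSet G) : FinGSet G :=
  mkObj (Σ i, (obj i).V)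

noncomputable def sigmaIncl {β : Type} [Finite β] (obj : β → FinGSet G) (i : β) :
    obj i ⟶ sigmaObj obj :=
  mkHom (X := obj i) (Y := sigmaObj obj) (fun x => show Σ j, (obj j).V from ⟨i, x⟩)
    (fun g x => rfl)

lemma sigmaMap_incl_bijective {β : Type} [Finite β] (obj : β → FinGSet G) :
    Bijective (sigmaMap (sigmaIncl obj)) := by
  have : sigmaMap (sigmaIncl obj) = fun p => show Σ j, (obj j).V from ⟨p.1, p.2⟩ := rfl
  rw [this]
  constructor
  · intro p q h; cases p; cases q; exact h
  · intro x; exact ⟨⟨x.1, x.2⟩, rfl⟩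

lemma bijective_of_isColimit {β : Type} [Finite β] {obj : β → FinGSet G} {X : FinGSet G}
    (ι : ∀ i, obj i ⟶ X) (hc : IsColimit (Cofan.mk X ι)) : Bijective (sigmaMap ι) := by
  have h1 := isColimitOfBijective (sigmaIncl obj) (sigmaMap_incl_bijective obj)
  let φ := IsColimit.coconePointUniqueUpToIso h1 hc
  have hφ : ∀ i, sigmaIncl obj i ≫ φ.hom = ι i := fun i =>
    IsColimit.comp_coconePointUniqueUpToIso_hom h1 hc ⟨i⟩
  have hbij : Bijective φ.hom.hom := by
    have h1 : φ.hom.hom ∘ φ.inv.hom = id := funext (ConcreteCategory.congr_hom (congrArg Action.Hom.hom φ.inv_hom_id))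
    have h2 : φ.inv.hom ∘ φ.hom.hom = id := funext (ConcreteCategory.congr_hom (congrArg Action.Hom.hom φ.hom_inv_id))
    exact Function.bijective_iff_has_inverse.2 ⟨φ.inv.hom, congrFun h2, congrFun h1⟩
  have : sigmaMap ι = φ.hom.hom ∘ sigmaMap (sigmaIncl obj) := by
    funext p
    show (ι p.1).hom p.2 = φ.hom.hom ((sigmaIncl obj p.1).hom p.2)
    rw [← hφ p.1]; rfl
  rw [this]
  exact hbij.comp (sigmaMap_incl_bijective obj)

-- Binary (Sum) machinery
instance sumAction (A B : FinGSet G) : MulAction G (A.V ⊕ B.V) where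
  smul g p := Sum.map (fun a => g • a) (fun b => g • b) p
  one_smul p := by
    cases p with
    | inl a => exact congrArg Sum.inl (one_smul G a)
    | inr b => exact congrArg Sum.inr (one_smul G b)
  mul_smul g h p := by
    cases p with
    | inl a => exact congrArg Sum.inl (mul_smul g h a)
    | inr b => exact congrArg Sum.inr (mul_smul g h b)

lemma sum_smul_inl (A B : FinGSet G) (g : G) (a : A.V) :
    (g • (Sum.inl a : A.V ⊕ B.V)) = Sum.inl (g • a) := rfl
lemma sum_smul_inr (A B : FinGSet G) (g : G) (b : B.V) :
    (g • (Sum.inr b : A.V ⊕ B.V)) = Sum.inr (g • b) := rfl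

def binMap {A B X : FinGSet G} (ia : A ⟶ X) (ib : B ⟶ X) : A.V ⊕ B.V → X.V :=
  Sum.elim ia.hom ib.hom

lemma binMap_equivariant {A B X : FinGSet G} (ia : A ⟶ X) (ib : B ⟶ X) (g : G)
    (p : A.V ⊕ B.V) : binMap ia ib (g • p) = g • binMap ia ib p := by
  cases p
  · exact hom_smul ia g _
  · exact hom_smul ib g _

noncomputable def isColimitBinOfBijective {A B X : FinGSet G} (ia : A ⟶ X) (ib : B ⟶ X)
    (hb : Bijective (binMap ia ib)) : IsColimit (BinaryCofan.mk ia ib) := by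
  set e := Equiv.ofBijective _ hb with he
  have hsymm : ∀ (g : G) (x : X.V), e.symm (g • x) = g • e.symm x := by
    intro g x
    apply e.injective
    rw [Equiv.apply_symm_apply]
    show _ = binMap ia ib _
    rw [binMap_equivariant]
    simp only [he, Equiv.ofBijective_apply_symm_apply]
  have hE : ∀ (T : FinGSet G) (f : A ⟶ T) (gg : B ⟶ T) (g : G) (x : X.V),
      Sum.elim f.hom gg.hom (e.symm (g • x)) = g • Sum.elim f.hom gg.hom (e.symm x) := by
    intro T f gg g x
    rw [hsymm]
    cases e.symm x
    · exact hom_smul f g _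
    · exact hom_smul gg g _
  refine BinaryCofan.IsColimit.mk _
    (fun {T} f gg => mkHom (fun x => Sum.elim f.hom gg.hom (e.symm x)) (hE T f gg)) ?_ ?_ ?_
  · intro T f gg
    apply Action.hom_ext; apply FintypeCat.hom_ext; intro a
    show Sum.elim f.hom gg.hom (e.symm (ia.hom a)) = f.hom a
    have : e.symm (ia.hom a) = Sum.inl a := by
      apply e.injective; rw [Equiv.apply_symm_apply]; rfl
    rw [this]; rfl
  · intro T f gg
    apply Action.hom_ext; apply FintypeCat.hom_ext; intro b
    show Sum.elim f.hom gg.hom (e.symm (ib.hom b)) = gg.hom b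
    have : e.symm (ib.hom b) = Sum.inr b := by
      apply e.injective; rw [Equiv.apply_symm_apply]; rfl
    rw [this]; rfl
  · intro T f gg m h1 h2
    apply Action.hom_ext; apply FintypeCat.hom_ext; intro x
    obtain ⟨p, rfl⟩ := hb.2 x
    show m.hom (binMap ia ib p) = Sum.elim f.hom gg.hom (e.symm (binMap ia ib p))
    rw [show e.symm (binMap ia ib p) = p from e.symm_apply_apply p]
    cases p with
    | inl a => exact ConcreteCategory.congr_hom (congrArg Action.Hom.hom h1) a
    | inr b => exact ConcreteCategory.congr_hom (congrArg Action.Hom.hom h2) b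

noncomputable def sumObj (A B : FinGSet G) : FinGSet G := mkObj (A.V ⊕ B.V)
noncomputable def sumInl (A B : FinGSet G) : A ⟶ sumObj A B :=
  mkHom (X := A) (Y := sumObj A B) (fun a => show A.V ⊕ B.V from Sum.inl a) (fun g a => rfl)
noncomputable def sumInr (A B : FinGSet G) : B ⟶ sumObj A B :=
  mkHom (X := B) (Y := sumObj A B) (fun b => show A.V ⊕ B.V from Sum.inr b) (fun g b => rfl)

lemma binMap_sum_bijective (A B : FinGSet G) : Bijective (binMap (sumInl A B) (sumInr A B)) := by
  constructor
  · intro p q h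
    cases p <;> cases q <;> first
      | (exact congrArg _ (Sum.inl.inj h))
      | (exact congrArg _ (Sum.inr.inj h))
      | (exact absurd h (fun hh => Sum.inl_ne_inr hh))
      | (exact absurd h (fun hh => Sum.inr_ne_inl hh))
  · intro x
    cases x with
    | inl a => exact ⟨Sum.inl a, rfl⟩
    | inr b => exact ⟨Sum.inr b, rfl⟩

lemma bijective_of_isColimitBin {A B X : FinGSet G} (ia : A ⟶ X) (ib : B ⟶ X)
    (hc : IsColimit (BinaryCofan.mk ia ib)) : Bijective (binMap ia ib) := by
  have h1 := isColimitBinOfBijective (sumInl A B) (sumInr A B) (binMap_sum_bijective A B)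
  let φ := IsColimit.coconePointUniqueUpToIso h1 hc
  have hl : sumInl A B ≫ φ.hom = ia :=
    IsColimit.comp_coconePointUniqueUpToIso_hom h1 hc ⟨WalkingPair.left⟩
  have hr : sumInr A B ≫ φ.hom = ib :=
    IsColimit.comp_coconePointUniqueUpToIso_hom h1 hc ⟨WalkingPair.right⟩
  have hbij : Bijective φ.hom.hom := by
    have h2 : φ.hom.hom ∘ φ.inv.hom = id := funext (ConcreteCategory.congr_hom (congrArg Action.Hom.hom φ.inv_hom_id))
    have h3 : φ.inv.hom ∘ φ.hom.hom = id := funext (ConcreteCategory.congr_hom (congrArg Action.Hom.hom φ.hom_inv_id))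
    exact Function.bijective_iff_has_inverse.2 ⟨φ.inv.hom, congrFun h3, congrFun h2⟩
  have heq : binMap ia ib = φ.hom.hom ∘ binMap (sumInl A B) (sumInr A B) := by
    funext p
    cases p with
    | inl a => exact (ConcreteCategory.congr_hom (congrArg Action.Hom.hom hl) a).symm
    | inr b => exact (ConcreteCategory.congr_hom (congrArg Action.Hom.hom hr) b).symm
  rw [heq]
  exact hbij.comp (binMap_sum_bijective A B)


-- complement of an injective map
noncomputable def complObj {A X : FinGSet G} (i : A ⟶ X) : FinGSet G :=
  haveI : MulAction G {x : X.V // x ∉ Set.range i.hom} :=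
    { smul := fun g x => ⟨g • x.1, by
        rintro ⟨a, ha⟩
        exact x.2 ⟨g⁻¹ • a, by
          rw [hom_smul]
          rw [ha]
          simp⟩⟩
      one_smul := fun x => Subtype.ext (one_smul G x.1)
      mul_smul := fun g h x => Subtype.ext (mul_smul g h x.1) }
  mkObj {x : X.V // x ∉ Set.range i.hom}

noncomputable def complIncl {A X : FinGSet G} (i : A ⟶ X) : complObj i ⟶ X :=
  mkHom (X := complObj i) (Y := X) (fun x => x.1) (fun g x => rfl)

lemma isSummand_of_injective {A X : FinGSet G} (i : A ⟶ X) (hi : Injective i.hom) :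
    IsSummandInclusion i := by
  refine ⟨complObj i, complIncl i, ⟨isColimitBinOfBijective _ _ ⟨?_, ?_⟩⟩⟩
  · intro p q h
    cases p with
    | inl a =>
      cases q with
      | inl a' => exact congrArg Sum.inl (hi h)
      | inr x => exact absurd (show i.hom a = x.1 from h) (fun hh => x.2 ⟨a, hh⟩)
    | inr x =>
      cases q with
      | inl a => exact absurd (show x.1 = i.hom a from h).symm (fun hh => x.2 ⟨a, hh⟩)
      | inr x' => exact congrArg Sum.inr (Subtype.ext h)
  · intro x
    by_cases hx : x ∈ Set.range i.hom
    · obtain ⟨a, rfl⟩ := hx; exact ⟨Sum.inl a, rfl⟩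
    · exact ⟨Sum.inr ⟨x, hx⟩, rfl⟩

lemma injective_of_isSummand {A X : FinGSet G} (i : A ⟶ X) (hi : IsSummandInclusion i) :
    Injective i.hom := by
  obtain ⟨C, c, ⟨hc⟩⟩ := hi
  have hb := bijective_of_isColimitBin i c hc
  intro a a' h
  have := hb.1 (a₁ := Sum.inl a) (a₂ := Sum.inl a') h
  exact Sum.inl.inj this

lemma summand_iff_injective {A X : FinGSet G} (i : A ⟶ X) :
    IsSummandInclusion i ↔ Injective i.hom :=
  ⟨injective_of_isSummand i, isSummand_of_injective i⟩

-- concrete pullback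
noncomputable def pbObj {V X W : FinGSet G} (q : V ⟶ W) (p : X ⟶ W) : FinGSet G :=
  haveI : MulAction G {z : V.V × X.V // q.hom z.1 = p.hom z.2} :=
    { smul := fun g z => ⟨(g • z.1.1, g • z.1.2), by
        rw [hom_smul, hom_smul, z.2]⟩
      one_smul := fun z => Subtype.ext (by
        show ((1:G) • z.1.1, (1:G) • z.1.2) = z.1
        simp)
      mul_smul := fun g h z => Subtype.ext (by
        show ((g*h) • z.1.1, (g*h) • z.1.2) = (g • (h • z.1.1), g • (h • z.1.2))
        simp [mul_smul]) }
  mkObj {z : V.V × X.V // q.hom z.1 = p.hom z.2}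

noncomputable def pbFst {V X W : FinGSet G} (q : V ⟶ W) (p : X ⟶ W) : pbObj q p ⟶ V :=
  mkHom (X := pbObj q p) (Y := V) (fun z => z.1.1) (fun g z => rfl)
noncomputable def pbSnd {V X W : FinGSet G} (q : V ⟶ W) (p : X ⟶ W) : pbObj q p ⟶ X :=
  mkHom (X := pbObj q p) (Y := X) (fun z => z.1.2) (fun g z => rfl)

lemma mem_pb_smul {V X W : FinGSet G} (q : V ⟶ W) (p : X ⟶ W) (g : G)
    (z : (pbObj q p).V) : ((pbFst q p).hom (g • z), (pbSnd q p).hom (g • z))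
      = (g • (pbFst q p).hom z, g • (pbSnd q p).hom z) := rfl

noncomputable def pbIsPullback {V X W : FinGSet G} (q : V ⟶ W) (p : X ⟶ W) :
    IsPullback (pbFst q p) (pbSnd q p) q p := by
  refine ⟨⟨?_⟩, ⟨PullbackCone.IsLimit.mk _ ?_ ?_ ?_ ?_⟩⟩
  · apply Action.hom_ext; apply FintypeCat.hom_ext; intro z
    exact z.2
  · intro s
    refine mkHom (X := s.pt) (Y := pbObj q p)
      (fun y => ⟨(s.fst.hom y, s.snd.hom y), ConcreteCategory.congr_hom (congrArg Action.Hom.hom s.condition) y⟩)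
      (fun g y => Subtype.ext ?_)
    show (s.fst.hom (g • y), s.snd.hom (g • y)) = (g • s.fst.hom y, g • s.snd.hom y)
    rw [hom_smul, hom_smul]
  · intro s; apply Action.hom_ext; apply FintypeCat.hom_ext; intro y; rfl
  · intro s; apply Action.hom_ext; apply FintypeCat.hom_ext; intro y; rfl
  · intro s m h1 h2
    apply Action.hom_ext; apply FintypeCat.hom_ext; intro y
    apply Subtype.ext
    apply Prod.ext
    · exact ConcreteCategory.congr_hom (congrArg Action.Hom.hom h1) y
    · exact ConcreteCategory.congr_hom (congrArg Action.Hom.hom h2) y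

noncomputable def isoOfBijective {X Y : FinGSet G} (f : X ⟶ Y) (hf : Bijective f.hom) : X ≅ Y where
  hom := f
  inv := mkHom (Equiv.ofBijective f.hom hf).symm (by
    intro g y
    apply hf.1
    rw [hom_smul]
    simp [Equiv.ofBijective_apply_symm_apply])
  hom_inv_id := by
    apply Action.hom_ext; apply FintypeCat.hom_ext; intro x
    exact (Equiv.ofBijective f.hom hf).symm_apply_apply x
  inv_hom_id := by
    apply Action.hom_ext; apply FintypeCat.hom_ext; intro y
    exact (Equiv.ofBijective f.hom hf).apply_symm_apply y

lemma isIso_of_bijective {X Y : FinGSet G} (f : X ⟶ Y) (hf : Bijective f.hom) : IsIso f :=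
  ⟨(isoOfBijective f hf).inv, (isoOfBijective f hf).hom_inv_id, (isoOfBijective f hf).inv_hom_id⟩

lemma bijective_of_isIso {X Y : FinGSet G} (f : X ⟶ Y) [IsIso f] : Bijective f.hom := by
  have h1 : f.hom ∘ (CategoryTheory.inv f).hom = id :=
    funext (ConcreteCategory.congr_hom (congrArg Action.Hom.hom (IsIso.inv_hom_id f)))
  have h2 : (CategoryTheory.inv f).hom ∘ f.hom = id :=
    funext (ConcreteCategory.congr_hom (congrArg Action.Hom.hom (IsIso.hom_inv_id f)))
  exact Function.bijective_iff_has_inverse.2 ⟨(CategoryTheory.inv f).hom, congrFun h2, congrFun h1⟩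

lemma surjective_of_transitive {X Y : FinGSet G} (f : X ⟶ Y) (hX : Nonempty X.V)
    (hY : IsTransitive Y) : Surjective f.hom := by
  obtain ⟨x₀⟩ := hX
  intro y
  obtain ⟨g, hg⟩ := hY.2 (f.hom x₀) y
  exact ⟨g • x₀, by rw [hom_smul]; exact hg⟩

lemma isIso_of_injective_transitive {X Y : FinGSet G} (f : X ⟶ Y) (hf : Injective f.hom)
    (hX : Nonempty X.V) (hY : IsTransitive Y) : IsIso f :=
  isIso_of_bijective f ⟨hf, surjective_of_transitive f hX hY⟩

-- factorization through a leg
lemma factor_of_range {A X V₀ : FinGSet G} (ia : A ⟶ X) (hinj : Injective ia.hom)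
    (j : V₀ ⟶ X) (hr : ∀ v, j.hom v ∈ Set.range ia.hom) :
    ∃ g : V₀ ⟶ A, g ≫ ia = j := by
  have hspec : ∀ v, ia.hom ((hr v).choose) = j.hom v := fun v => (hr v).choose_spec
  refine ⟨mkHom (fun v => (hr v).choose) ?_, ?_⟩
  · intro g v
    apply hinj
    rw [hspec, hom_smul, hom_smul, hspec]
  · apply Action.hom_ext; apply FintypeCat.hom_ext; intro v
    exact hspec v

lemma range_of_transitive {V₀ X A : FinGSet G} (j : V₀ ⟶ X) (hV₀ : IsTransitive V₀)
    (ia : A ⟶ X) (v₀ : V₀.V) (h₀ : j.hom v₀ ∈ Set.range ia.hom) :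
    ∀ v, j.hom v ∈ Set.range ia.hom := by
  intro v
  obtain ⟨g, hg⟩ := hV₀.2 v₀ v
  obtain ⟨a, ha⟩ := h₀
  refine ⟨g • a, ?_⟩
  rw [hom_smul, ha, ← hom_smul]
  exact congrArg j.hom hg

lemma factor_orbit_cofan {β : Type} {obj : β → FinGSet G} {X V₀ : FinGSet G}
    (ι : ∀ i, obj i ⟶ X) (hb : Bijective (sigmaMap ι)) (j : V₀ ⟶ X)
    (hV₀ : IsTransitive V₀) :
    ∃ (i : β) (g : V₀ ⟶ obj i), g ≫ ι i = j := by
  obtain ⟨v₀⟩ := hV₀.1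
  obtain ⟨p, hp⟩ := hb.2 (j.hom v₀)
  have hinj : Injective (ι p.1).hom := by
    intro a a' h
    have := hb.1 (a₁ := ⟨p.1, a⟩) (a₂ := ⟨p.1, a'⟩) h
    exact eq_of_heq (Sigma.mk.inj_iff.1 this).2
  obtain ⟨g, hg⟩ := factor_of_range (ι p.1) hinj j
    (range_of_transitive j hV₀ (ι p.1) v₀ ⟨p.2, hp⟩)
  exact ⟨p.1, g, hg⟩

lemma factor_binary {A B X V₀ : FinGSet G} (ia : A ⟶ X) (ib : B ⟶ X)
    (hb : Bijective (binMap ia ib)) (j : V₀ ⟶ X) (hV₀ : IsTransitive V₀) :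
    (∃ g : V₀ ⟶ A, g ≫ ia = j) ∨ (∃ g : V₀ ⟶ B, g ≫ ib = j) := by
  obtain ⟨v₀⟩ := hV₀.1
  obtain ⟨p, hp⟩ := hb.2 (j.hom v₀)
  cases p with
  | inl a =>
    left
    have hinj : Injective ia.hom := fun x y h =>
      Sum.inl.inj (hb.1 (a₁ := Sum.inl x) (a₂ := Sum.inl y) h)
    exact factor_of_range ia hinj j (range_of_transitive j hV₀ ia v₀ ⟨a, hp⟩)
  | inr b =>
    right
    have hinj : Injective ib.hom := fun x y h =>
      Sum.inr.inj (hb.1 (a₁ := Sum.inr x) (a₂ := Sum.inr y) h)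
    exact factor_of_range ib hinj j (range_of_transitive j hV₀ ib v₀ ⟨b, hp⟩)

-- orbit decomposition
noncomputable def classObj (X : FinGSet G) (c : Quotient (MulAction.orbitRel G X.V)) :
    FinGSet G :=
  haveI : MulAction G {x : X.V // Quotient.mk (MulAction.orbitRel G X.V) x = c} :=
    { smul := fun g x => ⟨g • x.1, (Quotient.sound (MulAction.mem_orbit x.1 g)).trans x.2⟩
      one_smul := fun x => Subtype.ext (one_smul G x.1)
      mul_smul := fun g h x => Subtype.ext (mul_smul g h x.1) }
  mkObj {x : X.V // Quotient.mk (MulAction.orbitRel G X.V) x = c}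

noncomputable def classIncl (X : FinGSet G) (c : Quotient (MulAction.orbitRel G X.V)) :
    classObj X c ⟶ X :=
  mkHom (X := classObj X c) (Y := X) (fun x => x.1) (fun g x => rfl)

lemma classObj_transitive (X : FinGSet G) (c : Quotient (MulAction.orbitRel G X.V)) :
    IsTransitive (classObj X c) := by
  constructor
  · exact ⟨⟨c.out, Quotient.out_eq c⟩⟩
  · rintro ⟨x, hx⟩ ⟨y, hy⟩
    have : (MulAction.orbitRel G X.V) y x := Quotient.exact (hy.trans hx.symm)
    obtain ⟨g, hg⟩ := this
    exact ⟨g, Subtype.ext hg⟩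

lemma orbit_decomposition (X : FinGSet G) :
    ∃ (n : ℕ) (obj : Fin n → FinGSet G) (ι : ∀ i, obj i ⟶ X),
      (∀ i, IsTransitive (obj i)) ∧ Bijective (sigmaMap ι) := by
  haveI : Fintype (Quotient (MulAction.orbitRel G X.V)) := Fintype.ofFinite _
  set Q := Quotient (MulAction.orbitRel G X.V)
  let e : Fin (Fintype.card Q) ≃ Q := (Fintype.equivFin Q).symm
  refine ⟨Fintype.card Q, fun i => classObj X (e i), fun i => classIncl X (e i),
    fun i => classObj_transitive X (e i), ?_, ?_⟩
  · rintro ⟨i, x⟩ ⟨i', x'⟩ h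
    have hx : x.1 = x'.1 := h
    have : e i = e i' := by rw [← x.2, ← x'.2, hx]
    have hi : i = i' := e.injective this
    subst hi
    exact congrArg (Sigma.mk i) (Subtype.ext hx)
  · intro x
    exact ⟨⟨e.symm (Quotient.mk _ x), ⟨x, by simp⟩⟩, rfl⟩

lemma leg_injective {β : Type} {obj : β → FinGSet G} {X : FinGSet G}
    (ι : ∀ i, obj i ⟶ X) (hb : Bijective (sigmaMap ι)) (i : β) :
    Injective (ι i).hom := fun a a' h =>
  eq_of_heq (Sigma.mk.inj_iff.1 (hb.1 (a₁ := ⟨i, a⟩) (a₂ := ⟨i, a'⟩) h)).2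

lemma sigmaMap_const_bij {β : Type} (hne : Nonempty β) (hsub : ∀ x y : β, x = y)
    {V X : FinGSet G} (f : V ⟶ X) (hf : Bijective f.hom) :
    Bijective (sigmaMap (obj := fun _ : β => V) (fun _ => f)) := by
  constructor
  · rintro ⟨i, a⟩ ⟨i', a'⟩ h
    have hi : i = i' := hsub i i'
    subst hi
    exact congrArg (Sigma.mk i) (hf.1 h)
  · intro x
    obtain ⟨a, ha⟩ := hf.2 x
    exact ⟨⟨hne.some, a⟩, ha⟩


lemma foldmap_of_iso {V W : FinGSet G} (f : V ⟶ W) (hV : IsTransitive V)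
    (hf : Bijective f.hom) : IsFoldMapP IsTransitive f := by
  have hsub : ∀ (x y : Σ _ : Fin 1, Fin 1), x = y := by
    rintro ⟨a, b⟩ ⟨c, d⟩
    have h1 : a = c := Subsingleton.elim _ _
    subst h1
    have h2 : b = d := Subsingleton.elim _ _
    subst h2; rfl
  refine ⟨1, fun _ => V, fun _ => 1, fun _ => f, fun _ => 𝟙 V, fun _ => hV,
    ⟨?_⟩, ⟨?_⟩, fun p => Category.id_comp f⟩
  · exact isColimitOfBijective _ (sigmaMap_const_bij ⟨0⟩ (fun a b => Subsingleton.elim a b) f hf)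
  · exact isColimitOfBijective _ (sigmaMap_const_bij ⟨⟨0, 0⟩⟩ hsub (𝟙 V)
      (Function.bijective_id))

lemma foldmap_of_empty {X W : FinGSet G} (p : X ⟶ W) (hX : IsEmpty X.V)
    (hW : IsTransitive W) : IsFoldMapP IsTransitive p := by
  refine ⟨1, fun _ => W, fun _ => 0, fun _ => 𝟙 W, fun q => q.2.elim0, fun _ => hW,
    ⟨?_⟩, ⟨?_⟩, fun q => q.2.elim0⟩
  · exact isColimitOfBijective _ (sigmaMap_const_bij ⟨0⟩ (fun a b => Subsingleton.elim a b)
      (𝟙 W) Function.bijective_id)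
  · refine isColimitOfBijective _ ⟨fun {a} => a.1.2.elim0, fun x => (hX.false x).elim⟩

-- splitting off the first summand of a Fin (n+1) cofan
noncomputable def tailHom {n : ℕ} {obj : Fin (n + 1) → FinGSet G} {X : FinGSet G}
    (ι : ∀ i, obj i ⟶ X) : sigmaObj (fun i : Fin n => obj i.succ) ⟶ X :=
  mkHom (X := sigmaObj (fun i : Fin n => obj i.succ)) (Y := X)
    (fun p => (ι p.1.succ).hom p.2) (fun g p => hom_smul (ι p.1.succ) g p.2)

lemma split_cofan_bij {n : ℕ} {obj : Fin (n + 1) → FinGSet G} {X : FinGSet G}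
    (ι : ∀ i, obj i ⟶ X) (hb : Bijective (sigmaMap ι)) :
    Bijective (binMap (ι 0) (tailHom ι)) := by
  constructor
  · rintro (a | p) (a' | p') h
    · exact congrArg Sum.inl (leg_injective ι hb 0 h)
    · exfalso
      have h' := hb.1 (a₁ := ⟨0, a⟩) (a₂ := ⟨p'.1.succ, p'.2⟩) h
      exact (Fin.succ_ne_zero p'.1) (Sigma.mk.inj_iff.1 h').1.symm
    · exfalso
      have h' := hb.1 (a₁ := ⟨p.1.succ, p.2⟩) (a₂ := ⟨0, a'⟩) h
      exact (Fin.succ_ne_zero p.1) (Sigma.mk.inj_iff.1 h').1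
    · have h' := hb.1 (a₁ := ⟨p.1.succ, p.2⟩) (a₂ := ⟨p'.1.succ, p'.2⟩) h
      obtain ⟨h1, h2⟩ := Sigma.mk.inj_iff.1 h'
      obtain ⟨i, a⟩ := p
      obtain ⟨i', a'⟩ := p'
      have hi : i = i' := Fin.succ_injective _ h1
      subst hi
      exact congrArg Sum.inr (congrArg (Sigma.mk i) (eq_of_heq h2))
  · intro x
    obtain ⟨⟨i, a⟩, rfl⟩ := hb.2 x
    revert a
    refine Fin.cases ?_ ?_ i
    · intro a; exact ⟨Sum.inl a, rfl⟩
    · intro j a; exact ⟨Sum.inr ⟨j, a⟩, rfl⟩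

lemma tailHom_injective {n : ℕ} {obj : Fin (n + 1) → FinGSet G} {X : FinGSet G}
    (ι : ∀ i, obj i ⟶ X) (hb : Bijective (sigmaMap ι)) :
    Injective (tailHom ι).hom := fun p q h =>
  Sum.inr.inj ((split_cofan_bij ι hb).1 (a₁ := Sum.inr p) (a₂ := Sum.inr q) h)


variable [Fintype G]

/-- Membership in an indexing system is detected on orbit summands. -/
lemma mem_of_restrictions (J : GIndexingSystem G) : ∀ (n : ℕ) {X W : FinGSet G}
    (p : X ⟶ W), IsTransitive W →
    ∀ (obj : Fin n → FinGSet G) (ι : ∀ i, obj i ⟶ X),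
      (∀ i, IsTransitive (obj i)) → Bijective (sigmaMap ι) →
      (∀ (V₀ : FinGSet G) (j : V₀ ⟶ X), IsTransitive V₀ → Injective j.hom →
        J.mem (j ≫ p)) →
      J.mem p := by
  intro n
  induction n with
  | zero =>
    intro X W p hW obj ι _ hb _
    have hX : IsEmpty X.V := by
      constructor
      intro x
      obtain ⟨⟨i, _⟩, _⟩ := hb.2 x
      exact i.elim0
    exact J.trivial_mem p hW (foldmap_of_empty p hX hW)
  | succ n ih =>
    intro X W p hW obj ι hOrb hb hres
    have hbin := split_cofan_bij ι hb
    refine J.coprod_mem (ι 0) (tailHom ι) p hW ⟨isColimitBinOfBijective _ _ hbin⟩ ?_ ?_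
    · exact hres (obj 0) (ι 0) (hOrb 0) (leg_injective ι hb 0)
    · refine ih (tailHom ι ≫ p) hW (fun i : Fin n => obj i.succ)
        (sigmaIncl _) (fun i => hOrb i.succ) (sigmaMap_incl_bijective _) ?_
      intro V₀ j hV₀ hj
      rw [← Category.assoc]
      refine hres V₀ (j ≫ tailHom ι) hV₀ ?_
      exact (tailHom_injective ι hb).comp hj

lemma mem_iff_restrictions (J : GIndexingSystem G) {X W : FinGSet G} (p : X ⟶ W) :
    J.mem p ↔ (IsTransitive W ∧ ∀ (V₀ : FinGSet G) (j : V₀ ⟶ X),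
      IsTransitive V₀ → Injective j.hom → J.mem (j ≫ p)) := by
  constructor
  · intro h
    exact ⟨J.target_orbit p h, fun V₀ j hV₀ hj =>
      J.sub_mem j p (isSummand_of_injective j hj) h⟩
  · rintro ⟨hW, hres⟩
    obtain ⟨n, obj, ι, hOrb, hb⟩ := orbit_decomposition X
    exact mem_of_restrictions J n p hW obj ι hOrb hb hres

/-- joint injectivity of pullback legs -/
lemma pullback_joint_inj {P V X W : FinGSet G} {p₁ : P ⟶ V} {p₂ : P ⟶ X}
    {q : V ⟶ W} {p : X ⟶ W} (hpb : IsPullback p₁ p₂ q p) :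
    ∀ z z' : P.V, p₁.hom z = p₁.hom z' → p₂.hom z = p₂.hom z' → z = z' := by
  intro z z' h1 h2
  let ψ := IsLimit.conePointUniqueUpToIso hpb.isLimit (pbIsPullback q p).isLimit
  have hfst : ψ.hom ≫ pbFst q p = p₁ :=
    IsLimit.conePointUniqueUpToIso_hom_comp hpb.isLimit (pbIsPullback q p).isLimit
      WalkingCospan.left
  have hsnd : ψ.hom ≫ pbSnd q p = p₂ :=
    IsLimit.conePointUniqueUpToIso_hom_comp hpb.isLimit (pbIsPullback q p).isLimit
      WalkingCospan.right
  have hψ : Bijective ψ.hom.hom := by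
    have ha : ψ.hom.hom ∘ ψ.inv.hom = id := funext (ConcreteCategory.congr_hom (congrArg Action.Hom.hom ψ.inv_hom_id))
    have hb : ψ.inv.hom ∘ ψ.hom.hom = id := funext (ConcreteCategory.congr_hom (congrArg Action.Hom.hom ψ.hom_inv_id))
    exact Function.bijective_iff_has_inverse.2 ⟨ψ.inv.hom, congrFun hb, congrFun ha⟩
  apply hψ.1
  apply Subtype.ext
  apply Prod.ext
  · have e1 := ConcreteCategory.congr_hom (congrArg Action.Hom.hom hfst) z
    have e2 := ConcreteCategory.congr_hom (congrArg Action.Hom.hom hfst) z'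
    exact e1.trans (h1.trans e2.symm)
  · have e1 := ConcreteCategory.congr_hom (congrArg Action.Hom.hom hsnd) z
    have e2 := ConcreteCategory.congr_hom (congrArg Action.Hom.hom hsnd) z'
    exact e1.trans (h2.trans e2.symm)

/-- The forward map. -/
def fwd (J : GIndexingSystem G) : OrbitSubcategory G where
  mem {V W} f := IsTransitive V ∧ IsTransitive W ∧ J.mem f
  orbits f h := ⟨h.1, h.2.1⟩
  iso_mem f hV hW hf :=
    ⟨hV, hW, J.trivial_mem f hW (foldmap_of_iso f hV (bijective_of_isIso f))⟩
  comp_mem f g hf hg := ⟨hf.1, hg.2.1, J.ind_mem f g hf.2.1 hg.2.1 hf.2.2 hg.2.2⟩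
  base_change g f a b p₁ p₂ s hW' hV' hpb h1 h2 hs hf := by
    refine ⟨hW', hV', ?_⟩
    have hp₁ := J.res_mem p₁ p₂ b f hV' hf.2.1 hpb hf.2.2
    have := J.sub_mem s p₁ hs hp₁
    rwa [h1] at this

/-- The backward map. -/
def bwd (S : OrbitSubcategory G) : GIndexingSystem G where
  mem {X W} p := IsTransitive W ∧ ∀ (V₀ : FinGSet G) (j : V₀ ⟶ X),
      IsTransitive V₀ → Injective j.hom → S.mem (j ≫ p)
  target_orbit p h := h.1
  trivial_mem {X W} p hW hfold := by
    refine ⟨hW, fun V₀ j hV₀ hj => ?_⟩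
    obtain ⟨n, Wf, k, ι', ι, hOrb, ⟨hc'⟩, ⟨hc⟩, hcomp⟩ := hfold
    have hb' := bijective_of_isColimit ι' hc'
    have hb := bijective_of_isColimit ι hc
    obtain ⟨p₀, g, hg⟩ := factor_orbit_cofan ι hb j hV₀
    have hgp : j ≫ p = g ≫ ι' p₀.1 := by
      rw [← hg, Category.assoc, hcomp p₀]
    have hginj : Injective g.hom := by
      have : j.hom = (ι p₀).hom ∘ g.hom := by rw [← hg]; rfl
      intro a b hab
      apply hj
      rw [this]
      exact congrArg (ι p₀).hom hab
    have hgsurj : Surjective g.hom :=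
      surjective_of_transitive g hV₀.1 (hOrb p₀.1)
    have hι'inj : Injective (ι' p₀.1).hom := leg_injective ι' hb' p₀.1
    have hι'surj : Surjective (ι' p₀.1).hom :=
      surjective_of_transitive (ι' p₀.1) (hOrb p₀.1).1 hW
    have : Bijective (g ≫ ι' p₀.1).hom :=
      ⟨hι'inj.comp hginj, hι'surj.comp hgsurj⟩
    rw [hgp]
    exact S.iso_mem _ hV₀ hW (isIso_of_bijective _ this)
  iso_mem {X X' W} e p hp := by
    refine ⟨hp.1, fun V₀ j hV₀ hj => ?_⟩
    have hbe := bijective_of_isIso e.hom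
    have := hp.2 V₀ (j ≫ e.hom) hV₀ (hbe.1.comp hj)
    rwa [Category.assoc] at this
  res_mem {P X V W} p₁ p₂ q p hV hW hpb hp := by
    refine ⟨hV, fun V₀ j hV₀ hj => ?_⟩
    obtain ⟨v₀⟩ := hV₀.1
    set x₀ := p₂.hom (j.hom v₀) with hx₀
    set X₀ := classObj X (Quotient.mk (MulAction.orbitRel G X.V) x₀) with hX₀
    set i := classIncl X (Quotient.mk (MulAction.orbitRel G X.V) x₀) with hi
    have hX₀trans : IsTransitive X₀ := classObj_transitive X _
    have hiinj : Injective i.hom := fun a b hab => Subtype.ext hab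
    have hip : S.mem (i ≫ p) := hp.2 X₀ i hX₀trans hiinj
    have hclass : ∀ v : V₀.V, Quotient.mk (MulAction.orbitRel G X.V) (p₂.hom (j.hom v))
        = Quotient.mk (MulAction.orbitRel G X.V) x₀ := by
      intro v
      obtain ⟨gg, hgg⟩ := hV₀.2 v₀ v
      apply Quotient.sound
      refine ⟨gg, ?_⟩
      show gg • x₀ = p₂.hom (j.hom v)
      rw [hx₀, ← hom_smul, ← hom_smul]
      exact congrArg (fun z => p₂.hom (j.hom z)) hgg
    have hcond : ∀ v : V₀.V, q.hom (p₁.hom (j.hom v)) = p.hom (p₂.hom (j.hom v)) :=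
      fun v => ConcreteCategory.congr_hom (congrArg Action.Hom.hom hpb.w) (j.hom v)
    let s : V₀ ⟶ pbObj q (i ≫ p) :=
      mkHom (X := V₀) (Y := pbObj q (i ≫ p))
        (fun v => ⟨(p₁.hom (j.hom v), ⟨p₂.hom (j.hom v), hclass v⟩), hcond v⟩)
        (fun gg v => by
          apply Subtype.ext
          apply Prod.ext
          · show p₁.hom (j.hom (gg • v)) = gg • p₁.hom (j.hom v)
            rw [hom_smul, hom_smul]
          · apply Subtype.ext
            show p₂.hom (j.hom (gg • v)) = gg • p₂.hom (j.hom v)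
            rw [hom_smul, hom_smul])
    have hs1 : s ≫ pbFst q (i ≫ p) = j ≫ p₁ := by
      apply Action.hom_ext; apply FintypeCat.hom_ext; intro v; rfl
    have hs2 : s ≫ pbSnd q (i ≫ p) = s ≫ pbSnd q (i ≫ p) := rfl
    have hsinj : Injective s.hom := by
      intro v v' hvv
      have h1 : p₁.hom (j.hom v) = p₁.hom (j.hom v') :=
        congrArg (fun z => (Prod.fst z.1)) hvv
      have h2 : p₂.hom (j.hom v) = p₂.hom (j.hom v') :=
        congrArg (fun z => (Prod.snd z.1).1) hvv
      exact hj (pullback_joint_inj hpb _ _ h1 h2)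
    exact S.base_change (j ≫ p₁) (i ≫ p) (s ≫ pbSnd q (i ≫ p)) q
      (pbFst q (i ≫ p)) (pbSnd q (i ≫ p)) s hV₀ hV (pbIsPullback q (i ≫ p))
      hs1 hs2 (isSummand_of_injective s hsinj) hip
  conj_mem {X W W'} p e hW' hp := by
    refine ⟨hW', fun V₀ j hV₀ hj => ?_⟩
    rw [← Category.assoc]
    exact S.comp_mem (j ≫ p) e.hom (hp.2 V₀ j hV₀ hj)
      (S.iso_mem e.hom hp.1 hW' inferInstance)
  sub_mem {X' X W} j p hj hp := by
    refine ⟨hp.1, fun V₀ j₀ hV₀ hj₀ => ?_⟩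
    rw [← Category.assoc]
    exact hp.2 V₀ (j₀ ≫ j) hV₀ ((injective_of_isSummand j hj).comp hj₀)
  coprod_mem {A B X W} ia ib h hW hcol hma hmb := by
    refine ⟨hW, fun V₀ j hV₀ hj => ?_⟩
    obtain ⟨hc⟩ := hcol
    have hbin := bijective_of_isColimitBin ia ib hc
    rcases factor_binary ia ib hbin j hV₀ with ⟨g, hg⟩ | ⟨g, hg⟩
    · have hginj : Injective g.hom := by
        intro a b hab
        apply hj
        rw [← hg]
        exact congrArg ia.hom hab
      have := hma.2 V₀ g hV₀ hginj
      rwa [← Category.assoc, hg] at this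
    · have hginj : Injective g.hom := by
        intro a b hab
        apply hj
        rw [← hg]
        exact congrArg ib.hom hab
      have := hmb.2 V₀ g hV₀ hginj
      rwa [← Category.assoc, hg] at this
  ind_mem {U V W} p q hV hW hp hq := by
    refine ⟨hW, fun V₀ j hV₀ hj => ?_⟩
    have hqS : S.mem q := by
      have := hq.2 V (𝟙 V) hV (fun a b hab => hab)
      rwa [Category.id_comp] at this
    rw [← Category.assoc]
    exact S.comp_mem (j ≫ p) q (hp.2 V₀ j hV₀ hj) hqS

lemma gext {J₁ J₂ : GIndexingSystem G}
    (h : ∀ (X W : FinGSet G) (f : X ⟶ W), J₁.mem f ↔ J₂.mem f) : J₁ = J₂ := by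
  obtain ⟨m₁, t₁, tr₁, i₁, r₁, c₁, s₁, cp₁, in₁⟩ := J₁
  obtain ⟨m₂, t₂, tr₂, i₂, r₂, c₂, s₂, cp₂, in₂⟩ := J₂
  have hm : @m₁ = @m₂ := by
    funext X W f
    exact propext (h X W f)
  subst hm
  rfl

lemma oext {S₁ S₂ : OrbitSubcategory G}
    (h : ∀ (X W : FinGSet G) (f : X ⟶ W), S₁.mem f ↔ S₂.mem f) : S₁ = S₂ := by
  obtain ⟨m₁, o₁, i₁, c₁, b₁⟩ := S₁
  obtain ⟨m₂, o₂, i₂, c₂, b₂⟩ := S₂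
  have hm : @m₁ = @m₂ := by
    funext X W f
    exact propext (h X W f)
  subst hm
  rfl

lemma left_inv_bf (J : GIndexingSystem G) : bwd (fwd J) = J := by
  apply gext
  intro X W p
  constructor
  · rintro ⟨hW, hres⟩
    refine (mem_iff_restrictions J p).2 ⟨hW, fun V₀ j hV₀ hj => ?_⟩
    exact (hres V₀ j hV₀ hj).2.2
  · intro hp
    have h := (mem_iff_restrictions J p).1 hp
    exact ⟨h.1, fun V₀ j hV₀ hj => ⟨hV₀, h.1, h.2 V₀ j hV₀ hj⟩⟩

lemma right_inv_fb (S : OrbitSubcategory G) : fwd (bwd S) = S := by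
  apply oext
  intro V W f
  constructor
  · rintro ⟨hV, hW, hmem⟩
    have := hmem.2 V (𝟙 V) hV (fun a b hab => hab)
    rwa [Category.id_comp] at this
  · intro hf
    obtain ⟨hV, hW⟩ := S.orbits f hf
    refine ⟨hV, hW, hW, fun V₀ j hV₀ hj => ?_⟩
    haveI := isIso_of_injective_transitive j hj hV₀.1 hV
    exact S.comp_mem j f (S.iso_mem j hV₀ hV inferInstance) hf


end BHHelpers

/-- For a finite group `G`, there is a bijection between
`G`-indexing systems in the sense of Blumberg–Hill and wide subcategories of the
orbit category `O_G` closed under composition and base-change along summand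
inclusions; it is determined by declaring `f : V ⟶ W` between orbits to lie in `ℐ`
iff `f`, viewed as a finite `H`-set over `W ≅ G/H`, lies in `I(H)`. -/
theorem blumberg_hill_indexing_systems_bijection (G : Type) [Group G] [Fintype G] :
    ∃ e : GIndexingSystem G ≃ OrbitSubcategory G,
      ∀ (J : GIndexingSystem G) {V W : FinGSet G} (f : V ⟶ W),
        IsTransitive V → IsTransitive W → ((e J).mem f ↔ J.mem f) := by
  refine ⟨⟨fwd, bwd, left_inv_bf, right_inv_fb⟩, ?_⟩
  intro J V W f hV hW
  exact ⟨fun h => h.2.2, fun h => ⟨hV, hW, h⟩⟩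

end ParamOperads
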